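/- (Theorem 2: robust stability of IMC under model mismatch.) Let p ∈ [1,∞). Let F̂ and Δ be strictly causal operators (ℕ→ℝ^n)×(ℕ→ℝ^m) → (ℕ→ℝ^n) with F̂(x,u)_0 = Δ(x,u)_0 = 0, and let the true plant be F = F̂ + Δ. Assume: Δ has finite ℓ_p-gain γ_Δ > 0 in the sense ‖Δ(x,u)‖_p ≤ γ_Δ(‖x‖_p + ‖u‖_p) for all x ∈ ℓ_p, u ∈ ℓ_p; the true transition operator 𝓕 : (u,w) ↦ x (unique solution of x = F(x,u)+w) has finite ℓ_p-gain γ_F > 0 in the sense ‖𝓕(u,w)‖_p ≤ γ_F(‖u‖_p + ‖w‖_p); and M is a causal operator with finite ℓ_p-gain γ_M satisfying γ_M < γ_Δ^{-1}(γ_F + 1)^{-1}. Then for every w ∈ ℓ_p, the trajectories of the mismatched IMC closed loop (x = F(x,u)+w, ŵ = x − F̂(x,u), u = M(ŵ)) satisfy u ∈ ℓ_p and x ∈ ℓ_p with ‖u‖_p ≤ (γ_M (γ_Δ γ_F + 1)/(1 − γ_Δ γ_M (γ_F + 1))) ‖w‖_p and ‖x‖_p ≤ (γ_F (1 + γ_M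 (1 − γ_Δ))/(1 − γ_Δ γ_M (γ_F + 1))) ‖w‖_p; in particular the control policy ŵ_t = x_t − F̂(x,u)_t, u_t = M_t(ŵ_{t:0}) stabilizes the true closed-loop system. -/

import Mathlib

/-- An operator on sequences is causal if its output at time `t` depends only on
inputs up to time `t`. -/
def Causal {E F : Type*} (A : (ℕ → E) → (ℕ → F)) : Prop :=
  ∀ x y : ℕ → E, ∀ t : ℕ, (∀ s ≤ t, x s = y s) → A x t = A y t

/-- An operator on sequences is strictly causal if its output at time `t` depends only on
inputs strictly before time `t`. -/
def StrictlyCausal {E F : Type*} (A : (ℕ → E) → (ℕ → F)) : Prop :=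
  ∀ x y : ℕ → E, ∀ t : ℕ, (∀ s < t, x s = y s) → A x t = A y t

/-- A two-argument operator on sequences is strictly causal in its joint argument. -/
def StrictlyCausal2 {E E' F : Type*} (A : (ℕ → E) → (ℕ → E') → (ℕ → F)) : Prop :=
  ∀ x x' : ℕ → E, ∀ u u' : ℕ → E', ∀ t : ℕ,
    (∀ s < t, x s = x' s) → (∀ s < t, u s = u' s) → A x u t = A x' u' t

/-- A sequence belongs to `ℓ_p` if the `p`-th powers of the norms are summable. -/
def InLp (p : ℝ) {E : Type*} [Norm E] (x : ℕ → E) : Prop :=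
  Summable fun t => ‖x t‖ ^ p

/-- The `ℓ_p` norm of a sequence. -/
noncomputable def lpNorm (p : ℝ) {E : Type*} [Norm E] (x : ℕ → E) : ℝ :=
  (∑' t, ‖x t‖ ^ p) ^ (1 / p)

section Helpers

variable {p : ℝ} {k l : ℕ}

lemma lpNorm_nonneg' (p : ℝ) (x : ℕ → Fin k → ℝ) : 0 ≤ lpNorm p x :=
  Real.rpow_nonneg (tsum_nonneg fun _ => Real.rpow_nonneg (norm_nonneg _) _) _

lemma inLp_mono' (hp : 0 < p) {x : ℕ → Fin k → ℝ} {y : ℕ → Fin l → ℝ}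
    (h : ∀ t, ‖x t‖ ≤ ‖y t‖) (hy : InLp p y) : InLp p x :=
  hy.of_nonneg_of_le (fun _ => Real.rpow_nonneg (norm_nonneg _) _)
    (fun t => Real.rpow_le_rpow (norm_nonneg _) (h t) hp.le)

lemma lpNorm_mono' (hp : 0 < p) {x : ℕ → Fin k → ℝ} {y : ℕ → Fin l → ℝ}
    (h : ∀ t, ‖x t‖ ≤ ‖y t‖) (hy : InLp p y) : lpNorm p x ≤ lpNorm p y := by
  apply Real.rpow_le_rpow (tsum_nonneg fun _ => Real.rpow_nonneg (norm_nonneg _) _)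
    (Summable.tsum_le_tsum (fun t => Real.rpow_le_rpow (norm_nonneg _) (h t) hp.le)
      (inLp_mono' hp h hy) hy)
  positivity

lemma inLp_trunc' (hp : p ≠ 0) (x : ℕ → Fin k → ℝ) (T : ℕ) :
    InLp p (fun t => if t ≤ T then x t else 0) := by
  apply summable_of_ne_finset_zero (s := Finset.range (T + 1))
  intro t ht
  have h1 : ¬ t ≤ T := by simpa [Nat.lt_succ_iff] using ht
  simp [h1, Real.zero_rpow hp]

lemma lpNorm_rpow' (hp : 0 < p) (x : ℕ → Fin k → ℝ) :
    lpNorm p x ^ p = ∑' t, ‖x t‖ ^ p := by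
  rw [lpNorm, one_div, Real.rpow_inv_rpow
    (tsum_nonneg fun _ => Real.rpow_nonneg (norm_nonneg _) _) hp.ne']

end Helpers

noncomputable def solSeq {n m : ℕ}
    (G : (ℕ → Fin n → ℝ) → (ℕ → Fin m → ℝ) → (ℕ → Fin n → ℝ))
    (u : ℕ → Fin m → ℝ) (w : ℕ → Fin n → ℝ) : ℕ → Fin n → ℝ
  | t => G (fun s => if h : s < t then solSeq G u w s else 0) u t + w t
  termination_by t => t
  decreasing_by exact h

lemma solSeq_spec {n m : ℕ}
    {G : (ℕ → Fin n → ℝ) → (ℕ → Fin m → ℝ) → (ℕ → Fin n → ℝ)}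
    (hG : StrictlyCausal2 G) (u : ℕ → Fin m → ℝ) (w : ℕ → Fin n → ℝ) (t : ℕ) :
    solSeq G u w t = G (solSeq G u w) u t + w t := by
  rw [solSeq]
  congr 1
  exact hG _ _ u u t (fun s hs => by rw [dif_pos hs]) (fun _ _ => rfl)

/-- **Theorem 2: robust stability of IMC under model mismatch.** Under the
small-gain condition `γ_M < γ_Δ⁻¹(γ_F + 1)⁻¹`, the mismatched IMC closed-loop trajectories
satisfy `u ∈ ℓ_p` and `x ∈ ℓ_p` with the stated gain bounds; in particular the IMC policy
stabilizes the true closed-loop system. -/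
theorem robust_imc_stability {n m : ℕ} (p : ℝ) (hp : 1 ≤ p)
    (Fhat Δ : (ℕ → Fin n → ℝ) → (ℕ → Fin m → ℝ) → (ℕ → Fin n → ℝ))
    (hFhat : StrictlyCausal2 Fhat) (hΔsc : StrictlyCausal2 Δ)
    (hFhat0 : ∀ x u, Fhat x u 0 = 0) (hΔ0 : ∀ x u, Δ x u 0 = 0)
    (γΔ γF γM : ℝ) (hγΔ : 0 < γΔ) (hγF : 0 < γF) (hγM : 0 < γM)
    (hΔgain : ∀ (x : ℕ → Fin n → ℝ) (u : ℕ → Fin m → ℝ), InLp p x → InLp p u →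
      InLp p (Δ x u) ∧ lpNorm p (Δ x u) ≤ γΔ * (lpNorm p x + lpNorm p u))
    (hFgain : ∀ (u : ℕ → Fin m → ℝ) (w x : ℕ → Fin n → ℝ),
      (∀ t, x t = Fhat x u t + Δ x u t + w t) → InLp p u → InLp p w →
      InLp p x ∧ lpNorm p x ≤ γF * (lpNorm p u + lpNorm p w))
    (M : (ℕ → Fin n → ℝ) → (ℕ → Fin m → ℝ)) (hM : Causal M)
    (hMgain : ∀ v : ℕ → Fin n → ℝ, InLp p v →
      InLp p (M v) ∧ lpNorm p (M v) ≤ γM * lpNorm p v)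
    (hsg : γM < γΔ⁻¹ * (γF + 1)⁻¹) :
    ∀ (w x what : ℕ → Fin n → ℝ) (u : ℕ → Fin m → ℝ), InLp p w →
      (∀ t, x t = Fhat x u t + Δ x u t + w t) →
      (∀ t, what t = x t - Fhat x u t) →
      u = M what →
      InLp p u ∧ InLp p x ∧
      lpNorm p u ≤ (γM * (γΔ * γF + 1) / (1 - γΔ * γM * (γF + 1))) * lpNorm p w ∧
      lpNorm p x ≤ (γF * (1 + γM * (1 - γΔ)) / (1 - γΔ * γM * (γF + 1))) * lpNorm p w := by
  intro w x what u hw hx hwhat hu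
  have hp0 : (0 : ℝ) < p := lt_of_lt_of_le one_pos hp
  have hW : 0 ≤ lpNorm p w := lpNorm_nonneg' p w
  -- small gain constant
  have hc1 : γΔ * γM * (γF + 1) < 1 := by
    have hpos : (0 : ℝ) < γΔ * (γF + 1) := mul_pos hγΔ (by linarith)
    have h := mul_lt_mul_of_pos_left hsg hpos
    calc γΔ * γM * (γF + 1) = γΔ * (γF + 1) * γM := by ring
      _ < γΔ * (γF + 1) * (γΔ⁻¹ * (γF + 1)⁻¹) := h
      _ = 1 := by field_simp
  have hden : (0 : ℝ) < 1 - γΔ * γM * (γF + 1) := by linarith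
  set B := γM * (γΔ * γF + 1) / (1 - γΔ * γM * (γF + 1)) * lpNorm p w with hB
  set A := γF * (1 + γM * (1 - γΔ)) / (1 - γΔ * γM * (γF + 1)) * lpNorm p w with hA
  have hAB : γF * (B + lpNorm p w) = A := by
    rw [hA, hB, div_mul_eq_mul_div, div_mul_eq_mul_div, div_add' _ _ _ hden.ne', mul_div_assoc',
      div_left_inj' hden.ne']
    ring
  have hBnn : 0 ≤ B := by
    rw [hB]
    apply mul_nonneg (div_nonneg (by positivity) hden.le) hW
  -- the key truncation bound
  have key : ∀ T : ℕ, lpNorm p (fun t => if t ≤ T then u t else 0) ≤ B ∧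
      lpNorm p (fun t => if t ≤ T then x t else 0) ≤ A := by
    intro T
    set u' : ℕ → Fin m → ℝ := fun t => if t ≤ T then u t else 0 with hu'
    set x' : ℕ → Fin n → ℝ := fun t => if t ≤ T then x t else 0 with hx'
    set w' : ℕ → Fin n → ℝ := fun t => if t ≤ T then w t else 0 with hw'
    have hu'Lp : InLp p u' := inLp_trunc' hp0.ne' u T
    have hx'Lp : InLp p x' := inLp_trunc' hp0.ne' x T
    have hw'Lp : InLp p w' := inLp_trunc' hp0.ne' w T
    have hu'eq : ∀ s, s ≤ T → u' s = u s := fun s hs => if_pos hs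
    have hx'eq : ∀ s, s ≤ T → x' s = x s := fun s hs => if_pos hs
    have hw'eq : ∀ s, s ≤ T → w' s = w s := fun s hs => if_pos hs
    -- the auxiliary trajectory
    have hG : StrictlyCausal2 (fun (y : ℕ → Fin n → ℝ) (v : ℕ → Fin m → ℝ) =>
        fun t => Fhat y v t + Δ y v t) := by
      intro a a' b b' t ha hb
      simp only
      rw [hFhat a a' b b' t ha hb, hΔsc a a' b b' t ha hb]
    set xS := solSeq (fun y v => fun t => Fhat y v t + Δ y v t) u' w' with hxSdef
    have hxS : ∀ t, xS t = Fhat xS u' t + Δ xS u' t + w' t := fun t =>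
      solSeq_spec hG u' w' t
    obtain ⟨hxSLp, hxSb⟩ := hFgain u' w' xS hxS hu'Lp hw'Lp
    -- xS agrees with x up to time T
    have hagree : ∀ t, t ≤ T → xS t = x t := by
      intro t
      induction t using Nat.strong_induction_on with
      | _ t ih =>
        intro htT
        rw [hxS t, hx t, hw'eq t htT,
          hFhat xS x u' u t (fun s hs => ih s hs (hs.le.trans htT))
            (fun s hs => hu'eq s (hs.le.trans htT)),
          hΔsc xS x u' u t (fun s hs => ih s hs (hs.le.trans htT))
            (fun s hs => hu'eq s (hs.le.trans htT))]
    -- bound on truncated x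
    have hxa : lpNorm p x' ≤ lpNorm p xS := by
      apply lpNorm_mono' hp0 _ hxSLp
      intro t
      by_cases ht : t ≤ T
      · rw [hx'eq t ht, ← hagree t ht]
      · simp only [hx', if_neg ht, norm_zero]
        exact norm_nonneg _
    have hwb : lpNorm p w' ≤ lpNorm p w := by
      apply lpNorm_mono' hp0 _ hw
      intro t
      by_cases ht : t ≤ T
      · rw [hw'eq t ht]
      · simp only [hw', if_neg ht, norm_zero]
        exact norm_nonneg _
    have ha : lpNorm p x' ≤ γF * (lpNorm p u' + lpNorm p w) := by
      refine hxa.trans (hxSb.trans ?_)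
      have := lpNorm_nonneg' p u'
      nlinarith [hγF.le]
    -- bound on truncated u via the IMC loop
    obtain ⟨hΔLp, hΔb⟩ := hΔgain x' u' hx'Lp hu'Lp
    set v : ℕ → Fin n → ℝ := fun t => Δ x' u' t + w t with hv
    have hsum2 : Summable fun t => (‖Δ x' u' t‖ + ‖w t‖) ^ p :=
      Real.summable_Lp_add_of_nonneg hp (fun _ => norm_nonneg _) (fun _ => norm_nonneg _)
        hΔLp hw
    have hvLp : InLp p v := by
      apply hsum2.of_nonneg_of_le (fun _ => Real.rpow_nonneg (norm_nonneg _) _)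
      intro t
      exact Real.rpow_le_rpow (norm_nonneg _) (norm_add_le _ _) hp0.le
    have hvb : lpNorm p v ≤ lpNorm p (Δ x' u') + lpNorm p w := by
      have h1 := Real.Lp_add_le_tsum_of_nonneg' hp (fun i => norm_nonneg (Δ x' u' i))
        (fun i => norm_nonneg (w i)) hΔLp hw
      refine le_trans ?_ h1
      apply Real.rpow_le_rpow (tsum_nonneg fun _ => Real.rpow_nonneg (norm_nonneg _) _)
        (Summable.tsum_le_tsum (fun t => Real.rpow_le_rpow (norm_nonneg _) (norm_add_le _ _) hp0.le)
          hvLp hsum2)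
      positivity
    obtain ⟨hMvLp, hMvb⟩ := hMgain v hvLp
    have hwhatv : ∀ s, s ≤ T → what s = v s := by
      intro s hs
      have h1 : Δ x' u' s = Δ x u s :=
        hΔsc x' x u' u s (fun r hr => hx'eq r (hr.le.trans hs))
          (fun r hr => hu'eq r (hr.le.trans hs))
      rw [hv]
      simp only [h1]
      rw [hwhat s, hx s]
      abel
    have huMv : ∀ t, t ≤ T → u t = M v t := by
      intro t ht
      exact (congrFun hu t).trans (hM what v t (fun s hs => hwhatv s (hs.trans ht)))
    have hb : lpNorm p u' ≤ γM * (γΔ * (lpNorm p x' + lpNorm p u') + lpNorm p w) := by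
      have h1 : lpNorm p u' ≤ lpNorm p (M v) := by
        apply lpNorm_mono' hp0 _ hMvLp
        intro t
        by_cases ht : t ≤ T
        · rw [hu'eq t ht, huMv t ht]
        · simp only [hu', if_neg ht, norm_zero]
          exact norm_nonneg _
      refine h1.trans (hMvb.trans ?_)
      have h2 : lpNorm p v ≤ γΔ * (lpNorm p x' + lpNorm p u') + lpNorm p w := by
        refine hvb.trans ?_
        linarith [hΔb]
      nlinarith [hγM.le]
    -- small-gain algebra
    have key1 : lpNorm p u' ≤ B := by
      rw [hB, div_mul_eq_mul_div, le_div_iff₀ hden]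
      nlinarith [mul_le_mul_of_nonneg_left ha (mul_pos hγM hγΔ).le]
    have key2 : lpNorm p x' ≤ A := by
      rw [← hAB]
      have : lpNorm p u' + lpNorm p w ≤ B + lpNorm p w := by linarith
      nlinarith [hγF.le]
    exact ⟨key1, key2⟩
  -- assemble: uniform bounds on partial sums
  have hpartial : ∀ (y : ℕ → Fin n → ℝ) (c : ℝ), 0 ≤ c →
      (∀ T : ℕ, lpNorm p (fun t => if t ≤ T then y t else 0) ≤ c) →
      InLp p y ∧ lpNorm p y ≤ c := by
    intro y c hc hbd
    have hsumr : ∀ N : ℕ, ∑ i ∈ Finset.range N, ‖y i‖ ^ p ≤ c ^ p := by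
      intro N
      have h0 : ∑ i ∈ Finset.range N, ‖y i‖ ^ p =
          ∑ i ∈ Finset.range N, ‖(fun t => if t ≤ N then y t else 0) i‖ ^ p := by
        refine Finset.sum_congr rfl fun i hi => ?_
        rw [show (fun t => if t ≤ N then y t else 0) i = y i from
          if_pos (Finset.mem_range.mp hi).le]
      rw [h0]
      calc ∑ i ∈ Finset.range N, ‖(fun t => if t ≤ N then y t else 0) i‖ ^ p
          ≤ ∑' i, ‖(fun t => if t ≤ N then y t else 0) i‖ ^ p :=
            Summable.sum_le_tsum _ (fun i _ => Real.rpow_nonneg (norm_nonneg _) _)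
              (inLp_trunc' hp0.ne' y N)
        _ = lpNorm p (fun t => if t ≤ N then y t else 0) ^ p :=
            (lpNorm_rpow' hp0 _).symm
        _ ≤ c ^ p := Real.rpow_le_rpow (lpNorm_nonneg' p _) (hbd N) hp0.le
    have hyLp : InLp p y :=
      summable_of_sum_range_le (fun _ => Real.rpow_nonneg (norm_nonneg _) _) hsumr
    refine ⟨hyLp, ?_⟩
    have h1 : ∑' t, ‖y t‖ ^ p ≤ c ^ p :=
      Real.tsum_le_of_sum_range_le (fun _ => Real.rpow_nonneg (norm_nonneg _) _) hsumr
    calc lpNorm p y = (∑' t, ‖y t‖ ^ p) ^ (1 / p) := rfl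
      _ ≤ (c ^ p) ^ (1 / p) := by
          apply Real.rpow_le_rpow (tsum_nonneg fun _ => Real.rpow_nonneg (norm_nonneg _) _) h1
          positivity
      _ = c := by rw [one_div, Real.rpow_rpow_inv hc hp0.ne']
  -- apply to x
  obtain ⟨hxLp, hxb⟩ := hpartial x A (by rw [← hAB]; nlinarith [hγF.le, hW, hBnn]) fun T => (key T).2
  -- for u : same machinery, dimension m
  have hpartialu : InLp p u ∧ lpNorm p u ≤ B := by
    have hsumr : ∀ N : ℕ, ∑ i ∈ Finset.range N, ‖u i‖ ^ p ≤ B ^ p := by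
      intro N
      have h0 : ∑ i ∈ Finset.range N, ‖u i‖ ^ p =
          ∑ i ∈ Finset.range N, ‖(fun t => if t ≤ N then u t else 0) i‖ ^ p := by
        refine Finset.sum_congr rfl fun i hi => ?_
        rw [show (fun t => if t ≤ N then u t else 0) i = u i from
          if_pos (Finset.mem_range.mp hi).le]
      rw [h0]
      calc ∑ i ∈ Finset.range N, ‖(fun t => if t ≤ N then u t else 0) i‖ ^ p
          ≤ ∑' i, ‖(fun t => if t ≤ N then u t else 0) i‖ ^ p :=
            Summable.sum_le_tsum _ (fun i _ => Real.rpow_nonneg (norm_nonneg _) _)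
              (inLp_trunc' hp0.ne' u N)
        _ = lpNorm p (fun t => if t ≤ N then u t else 0) ^ p :=
            (lpNorm_rpow' hp0 _).symm
        _ ≤ B ^ p := Real.rpow_le_rpow (lpNorm_nonneg' p _) ((key N).1) hp0.le
    have huLp : InLp p u :=
      summable_of_sum_range_le (fun _ => Real.rpow_nonneg (norm_nonneg _) _) hsumr
    refine ⟨huLp, ?_⟩
    have h1 : ∑' t, ‖u t‖ ^ p ≤ B ^ p :=
      Real.tsum_le_of_sum_range_le (fun _ => Real.rpow_nonneg (norm_nonneg _) _) hsumr
    calc lpNorm p u = (∑' t, ‖u t‖ ^ p) ^ (1 / p) := rfl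
      _ ≤ (B ^ p) ^ (1 / p) := by
          apply Real.rpow_le_rpow (tsum_nonneg fun _ => Real.rpow_nonneg (norm_nonneg _) _) h1
          positivity
      _ = B := by rw [one_div, Real.rpow_rpow_inv hBnn hp0.ne']
  exact ⟨hpartialu.1, hxLp, hpartialu.2, hxb⟩
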